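/- Suppose Ψ is a Lie algebra automorphism of g₅ for which there exist signs σ, ρ, σ', ρ' ∈ {1, −1}, integers h₀, h₁, h₂, h₃, h₄, and real numbers c, z, w such that Ψ(W) = σ'W, Ψ(Z) = ρ'Z + h₀W, Ψ(Y₂) ∈ ±Y₂ + span{Z, W}, Ψ(Y₁) = ρ(Y₁ + (1/2)Z) + h₁Y₂ + h₂Z + cW, and Ψ(X₁) = σX₁ + (1/2)h₃Y₁ + (1/2)h₄Y₂ + zZ + wW. Then h₃ ≠ 0 or h₄ ≠ 0. -/
import Mathlib


noncomputable section

/-- The bracket of the Lie algebra g₅ on ℝ⁵ with basis X₁,Y₁,Y₂,Z,W at coordinates 0,…,4. -/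
def br5 (u v : Fin 5 → ℝ) : Fin 5 → ℝ :=
  ![0, 0, 0,
    u 0 * v 1 - u 1 * v 0,
    u 0 * v 3 - u 3 * v 0 + (u 1 * v 2 - u 2 * v 1)]

def X1 : Fin 5 → ℝ := Pi.single 0 1
def Y1 : Fin 5 → ℝ := Pi.single 1 1
def Y2 : Fin 5 → ℝ := Pi.single 2 1
def Zv : Fin 5 → ℝ := Pi.single 3 1
def Wv : Fin 5 → ℝ := Pi.single 4 1

/-- If Ψ is a Lie algebra automorphism of g₅ with Ψ(W)=σ'W, Ψ(Z)=ρ'Z+h₀W,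
Ψ(Y₂) ∈ ±Y₂ + span{Z,W}, Ψ(Y₁)=ρ(Y₁+(1/2)Z)+h₁Y₂+h₂Z+cW, and
Ψ(X₁)=σX₁+(1/2)h₃Y₁+(1/2)h₄Y₂+zZ+wW, where σ,ρ,σ',ρ' ∈ {1,-1} and
h₀,…,h₄ are integers, then h₃ ≠ 0 or h₄ ≠ 0. -/
theorem stmt7 (Ψ : (Fin 5 → ℝ) → (Fin 5 → ℝ))
    (hlin : IsLinearMap ℝ Ψ) (hbij : Function.Bijective Ψ)
    (hbr : ∀ u v, Ψ (br5 u v) = br5 (Ψ u) (Ψ v))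
    (σ ρ σ' ρ' : ℝ)
    (hσ : σ = 1 ∨ σ = -1) (hρ : ρ = 1 ∨ ρ = -1)
    (hσ' : σ' = 1 ∨ σ' = -1) (hρ' : ρ' = 1 ∨ ρ' = -1)
    (h₀ h₁ h₂ h₃ h₄ : ℤ) (c z w : ℝ)
    (hW : Ψ Wv = σ' • Wv)
    (hZ : Ψ Zv = ρ' • Zv + (h₀ : ℝ) • Wv)
    (hY₂ : ∃ ε : ℝ, (ε = 1 ∨ ε = -1) ∧ Ψ Y2 - ε • Y2 ∈ Submodule.span ℝ {Zv, Wv})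
    (hY₁ : Ψ Y1 = ρ • (Y1 + (1/2 : ℝ) • Zv) + (h₁ : ℝ) • Y2 + (h₂ : ℝ) • Zv + c • Wv)
    (hX₁ : Ψ X1 = σ • X1 + ((1/2 : ℝ) * (h₃ : ℝ)) • Y1 + ((1/2 : ℝ) * (h₄ : ℝ)) • Y2
      + z • Zv + w • Wv) :
    h₃ ≠ 0 ∨ h₄ ≠ 0 := by
  by_contra hcon
  push_neg at hcon
  obtain ⟨e3, e4⟩ := hcon
  subst e3; subst e4
  have hb : br5 X1 Y1 = Zv := by
    funext i; fin_cases i <;> simp [br5, X1, Y1, Zv, Pi.single, Function.update]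
  have key := hbr X1 Y1
  rw [hb, hZ, hX₁, hY₁] at key
  have k4 := congrFun key 4
  simp [br5, X1, Y1, Y2, Zv, Wv, Pi.single, Function.update] at k4
  rcases hσ with h | h <;> rcases hρ with h' | h' <;> subst h <;> subst h' <;>
    first
      | · have h2 : (2 * h₀ : ℤ) = 2 * h₂ + 1 := by
            have : ((2 * h₀ : ℤ) : ℝ) = ((2 * h₂ + 1 : ℤ) : ℝ) := by push_cast; linarith
            exact_mod_cast this
          omega
      | · have h2 : (2 * h₀ : ℤ) = 2 * h₂ - 1 := by
            have : ((2 * h₀ : ℤ) : ℝ) = ((2 * h₂ - 1 : ℤ) : ℝ) := by push_cast; linarith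
            exact_mod_cast this
          omega
      | · have h2 : (2 * h₀ : ℤ) = -(2 * h₂) + 1 := by
            have : ((2 * h₀ : ℤ) : ℝ) = ((-(2 * h₂) + 1 : ℤ) : ℝ) := by push_cast; linarith
            exact_mod_cast this
          omega
      | · have h2 : (2 * h₀ : ℤ) = -(2 * h₂) - 1 := by
            have : ((2 * h₀ : ℤ) : ℝ) = ((-(2 * h₂) - 1 : ℤ) : ℝ) := by push_cast; linarith
            exact_mod_cast this
          omega
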